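/- Let ψ : ℕ → ℝ⁺ with ψ(n) → ∞, ψ(n)/(log n) → α for some 0 ≤ α < 1. Then the set E_sup(Λ,ψ) = {x ∈ Λ : limsup_{n→∞} (log a_n(x))/ψ(n) = 1} has Hausdorff dimension 0. -/

import Mathlib

open Filter MeasureTheory Set
open scoped ENNReal NNReal

/-- The Gauss map. -/
noncomputable def gaussMap (x : ℝ) : ℝ := Int.fract x⁻¹

/-- The `n`-th partial quotient (for `n ≥ 1`) of the continued fraction expansion of `x`. -/
noncomputable def cfA (n : ℕ) (x : ℝ) : ℕ := ⌊(gaussMap^[n - 1] x)⁻¹⌋₊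

/-- The set `Λ` of points of `(0,1)` whose partial quotients are non-decreasing. -/
noncomputable def Lam : Set ℝ :=
  {x | x ∈ Set.Ioo (0:ℝ) 1 ∧ ∀ n : ℕ, 1 ≤ n → cfA n x ≤ cfA (n + 1) x}

lemma gauss_mem_Ico (x : ℝ) : gaussMap x ∈ Set.Ico (0:ℝ) 1 :=
  ⟨Int.fract_nonneg _, Int.fract_lt_one _⟩

lemma cfA_succ (n : ℕ) (hn : 1 ≤ n) (x : ℝ) : cfA (n + 1) x = cfA n (gaussMap x) := by
  have h1 : n + 1 - 1 = (n - 1) + 1 := by omega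
  simp only [cfA, h1, Function.iterate_succ_apply]

lemma pos_of_one_le_cfA_one {x : ℝ} (hx : x ∈ Set.Ico (0:ℝ) 1) (h : 1 ≤ cfA 1 x) :
    0 < x := by
  rcases eq_or_lt_of_le hx.1 with rfl | hx0
  · simp [cfA, gaussMap] at h
  · exact hx0

lemma cfA_one_eq (x : ℝ) : cfA 1 x = ⌊x⁻¹⌋₊ := by simp [cfA]

lemma inv_eq_cfA_add_gauss {x : ℝ} (hx0 : 0 < x) :
    x⁻¹ = (cfA 1 x : ℝ) + gaussMap x := by
  have hinv : (0:ℝ) ≤ x⁻¹ := by positivity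
  rw [cfA_one_eq, gaussMap, Int.fract, natCast_floor_eq_intCast_floor hinv]
  ring

lemma dist_le_prod : ∀ (n : ℕ) (x y : ℝ), x ∈ Set.Ico (0:ℝ) 1 → y ∈ Set.Ico (0:ℝ) 1 →
    (∀ i, i < n → cfA (i+1) x = cfA (i+1) y ∧ 1 ≤ cfA (i+1) x) →
    |x - y| ≤ ∏ i ∈ Finset.range n, ((cfA (i+1) x : ℝ))⁻¹ ^ 2 := by
  intro n
  induction n with
  | zero =>
    intro x y hx hy _
    simp only [Finset.range_zero, Finset.prod_empty]
    rw [abs_sub_le_iff]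
    constructor <;> nlinarith [hx.1, hx.2, hy.1, hy.2]
  | succ n ih =>
    intro x y hx hy h
    obtain ⟨hxy1, hone1⟩ := h 0 (Nat.succ_pos n)
    have hx0 : 0 < x := pos_of_one_le_cfA_one hx hone1
    have hy0 : 0 < y := pos_of_one_le_cfA_one hy (hxy1 ▸ hone1)
    set a : ℕ := cfA 1 x with ha
    have hxi : x⁻¹ = (a : ℝ) + gaussMap x := inv_eq_cfA_add_gauss hx0
    have hyi : y⁻¹ = (a : ℝ) + gaussMap y := by
      rw [hxy1]; exact inv_eq_cfA_add_gauss hy0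
    have ha1 : (1:ℝ) ≤ (a:ℝ) := by exact_mod_cast hone1
    -- x ≤ a⁻¹, y ≤ a⁻¹
    have hxle : x ≤ (a:ℝ)⁻¹ := by
      have h' : (a:ℝ) ≤ x⁻¹ := by rw [hxi]; linarith [(gauss_mem_Ico x).1]
      rw [← inv_inv x]
      exact inv_anti₀ (by linarith) h'
    have hyle : y ≤ (a:ℝ)⁻¹ := by
      have h' : (a:ℝ) ≤ y⁻¹ := by rw [hyi]; linarith [(gauss_mem_Ico y).1]
      rw [← inv_inv y]
      exact inv_anti₀ (by linarith) h'
    -- identity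
    have hid : x - y = x * y * (y⁻¹ - x⁻¹) := by
      field_simp
    have habs : |x - y| = x * y * |gaussMap x - gaussMap y| := by
      rw [hid, hxi, hyi]
      rw [abs_mul, abs_of_pos (by positivity : (0:ℝ) < x * y)]
      congr 1
      rw [show (a:ℝ) + gaussMap y - ((a:ℝ) + gaussMap x) = -(gaussMap x - gaussMap y) by ring,
        abs_neg]
    -- IH
    have hshift : ∀ i, cfA (i+1) (gaussMap x) = cfA (i+2) x := fun i =>
      (cfA_succ (i+1) (Nat.succ_le_succ (Nat.zero_le i)) x).symm
    have hshifty : ∀ i, cfA (i+1) (gaussMap y) = cfA (i+2) y := fun i =>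
      (cfA_succ (i+1) (Nat.succ_le_succ (Nat.zero_le i)) y).symm
    have hih := ih (gaussMap x) (gaussMap y) (gauss_mem_Ico x) (gauss_mem_Ico y) ?_
    · rw [Finset.prod_range_succ']
      have hprodeq : ∏ i ∈ Finset.range n, ((cfA (i+1) (gaussMap x) : ℝ))⁻¹ ^ 2
          = ∏ i ∈ Finset.range n, ((cfA (i+1+1) x : ℝ))⁻¹ ^ 2 := by
        refine Finset.prod_congr rfl fun i _ => ?_
        rw [hshift i]
      rw [hprodeq] at hih
      have hprodnn : (0:ℝ) ≤ ∏ i ∈ Finset.range n, ((cfA (i+1+1) x : ℝ))⁻¹ ^ 2 :=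
        Finset.prod_nonneg fun i _ => by positivity
      rw [habs]
      calc x * y * |gaussMap x - gaussMap y|
          ≤ (a:ℝ)⁻¹ * (a:ℝ)⁻¹ * (∏ i ∈ Finset.range n, ((cfA (i+1+1) x : ℝ))⁻¹ ^ 2) := by
            have hxynn : 0 ≤ x := le_of_lt hx0
            have h1 : x * y ≤ (a:ℝ)⁻¹ * (a:ℝ)⁻¹ :=
              mul_le_mul hxle hyle (le_of_lt hy0) (by positivity)
            exact mul_le_mul h1 hih (abs_nonneg _) (by positivity)
        _ = (∏ i ∈ Finset.range n, ((cfA (i+1+1) x : ℝ))⁻¹ ^ 2) * ((cfA (0+1) x : ℝ))⁻¹ ^ 2 := by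
            simp only [zero_add, ← ha]
            ring
    · intro i hi
      obtain ⟨he, h1⟩ := h (i+1) (Nat.succ_lt_succ hi)
      rw [hshift i, hshifty i]
      exact ⟨he, h1⟩

lemma cfA_chain {x : ℝ} (hm : ∀ n, 1 ≤ n → cfA n x ≤ cfA (n+1) x) :
    ∀ p q, 1 ≤ p → p ≤ q → cfA p x ≤ cfA q x := by
  intro p q hp hpq
  induction q, hpq using Nat.le_induction with
  | base => exact le_rfl
  | succ q hq ih => exact ih.trans (hm q (hp.trans hq))

lemma prod_le_pow {ρ : ℕ → ℝ} {c : ℝ} (hc : 0 ≤ c) (n M : ℕ) (hMn : M ≤ n)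
    (h01 : ∀ i, i < n → 0 ≤ ρ i ∧ ρ i ≤ 1)
    (hcc : ∀ i, M ≤ i → i < n → ρ i ≤ c) :
    ∏ i ∈ Finset.range n, ρ i ≤ c ^ (n - M) := by
  rw [Finset.range_eq_Ico, ← Finset.prod_Ico_consecutive _ (Nat.zero_le M) hMn]
  have h1 : ∏ i ∈ Finset.Ico 0 M, ρ i ≤ 1 := by
    apply Finset.prod_le_one
    · intro i hi
      exact (h01 i (lt_of_lt_of_le (Finset.mem_Ico.1 hi).2 hMn)).1
    · intro i hi
      exact (h01 i (lt_of_lt_of_le (Finset.mem_Ico.1 hi).2 hMn)).2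
  have h2 : ∏ i ∈ Finset.Ico M n, ρ i ≤ c ^ (n - M) := by
    calc ∏ i ∈ Finset.Ico M n, ρ i ≤ ∏ _i ∈ Finset.Ico M n, c := by
          apply Finset.prod_le_prod
          · intro i hi
            exact (h01 i (Finset.mem_Ico.1 hi).2).1
          · intro i hi
            exact hcc i (Finset.mem_Ico.1 hi).1 (Finset.mem_Ico.1 hi).2
      _ = c ^ (n - M) := by rw [Finset.prod_const, Nat.card_Ico]
  have h2nn : (0:ℝ) ≤ ∏ i ∈ Finset.Ico M n, ρ i :=
    Finset.prod_nonneg fun i hi => (h01 i (Finset.mem_Ico.1 hi).2).1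
  calc (∏ i ∈ Finset.Ico 0 M, ρ i) * ∏ i ∈ Finset.Ico M n, ρ i
      ≤ 1 * (c ^ (n - M)) := mul_le_mul h1 h2 h2nn zero_le_one
    _ = c ^ (n - M) := one_mul _

lemma card_words (n B K M : ℕ) :
    ((Fintype.piFinset fun _ : Fin n => Finset.Icc 1 B).filter
      (fun w => (∀ i j : Fin n, i ≤ j → w i ≤ w j) ∧
        ∀ i : Fin n, M ≤ (i:ℕ)+1 → K ≤ w i)).card ≤ 2 ^ (n + B) := by
  classical
  have := Finset.card_le_card_of_injOn
    (s := (Fintype.piFinset fun _ : Fin n => Finset.Icc 1 B).filter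
      (fun w => (∀ i j : Fin n, i ≤ j → w i ≤ w j) ∧
        ∀ i : Fin n, M ≤ (i:ℕ)+1 → K ≤ w i))
    (f := fun w : Fin n → ℕ => Finset.image (fun i : Fin n => w i + (i:ℕ)) Finset.univ)
    (t := (Finset.range (n + B)).powerset) ?_ ?_
  · calc _ ≤ (Finset.range (n + B)).powerset.card := this
      _ = 2 ^ (n + B) := by rw [Finset.card_powerset, Finset.card_range]
  · intro w hw
    rw [Finset.mem_coe, Finset.mem_filter] at hw
    rw [Finset.mem_coe, Finset.mem_powerset]
    intro m hm
    rw [Finset.mem_image] at hm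
    obtain ⟨i, _, rfl⟩ := hm
    have hwi : w i ≤ B := (Finset.mem_Icc.1 (Fintype.mem_piFinset.1 hw.1 i)).2
    have : (i:ℕ) < n := i.isLt
    rw [Finset.mem_range]
    omega
  · intro w hw w' hw' heq
    rw [Finset.mem_coe, Finset.mem_filter] at hw hw'
    have hsm : StrictMono (fun i : Fin n => w i + (i:ℕ)) := by
      intro i j hij
      have := hw.2.1 i j (le_of_lt hij)
      have hij' : (i:ℕ) < (j:ℕ) := hij
      show w i + (i:ℕ) < w j + (j:ℕ)
      omega
    have hsm' : StrictMono (fun i : Fin n => w' i + (i:ℕ)) := by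
      intro i j hij
      have := hw'.2.1 i j (le_of_lt hij)
      have hij' : (i:ℕ) < (j:ℕ) := hij
      show w' i + (i:ℕ) < w' j + (j:ℕ)
      omega
    set s := Finset.image (fun i : Fin n => w i + (i:ℕ)) Finset.univ with hs
    have hcard : s.card = n := by
      rw [hs, Finset.card_image_of_injective _ hsm.injective, Finset.card_univ,
        Fintype.card_fin]
    have h1 : (fun i : Fin n => w i + (i:ℕ)) = s.orderEmbOfFin hcard :=
      Finset.orderEmbOfFin_unique hcard
        (fun i => Finset.mem_image_of_mem _ (Finset.mem_univ i)) hsm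
    have h2 : (fun i : Fin n => w' i + (i:ℕ)) = s.orderEmbOfFin hcard := by
      have heq' : Finset.image (fun i : Fin n => w i + (i:ℕ)) Finset.univ
          = Finset.image (fun i : Fin n => w' i + (i:ℕ)) Finset.univ := heq
      refine Finset.orderEmbOfFin_unique hcard (fun i => ?_) hsm'
      rw [hs, heq']
      exact Finset.mem_image_of_mem _ (Finset.mem_univ i)
    funext i
    have := congrFun (h1.trans h2.symm) i
    simpa using this

noncomputable def ASet (β : ℝ) (K N M : ℕ) : Set ℝ :=
  {x | x ∈ Set.Ico (0:ℝ) 1 ∧ (∀ n, 1 ≤ n → cfA n x ≤ cfA (n+1) x) ∧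
    (∀ n, 1 ≤ n → 1 ≤ cfA n x) ∧ (∀ n, N ≤ n → (cfA n x : ℝ) ≤ (n:ℝ) ^ β) ∧
    (∀ n, M ≤ n → K ≤ cfA n x)}

lemma mu_ASet {β : ℝ} (hβ1 : β ≤ 1) {d : ℝ} (hd : 0 < d) (K N M : ℕ)
    (hK2 : 2 ≤ K) (hK16 : (16:ℝ) ≤ (K:ℝ) ^ (2*d)) :
    μH[d] (ASet β K N M) = 0 := by
  classical
  have hKpos : (0:ℝ) < K := by
    have : (0:ℕ) < K := by omega
    exact_mod_cast this
  have hK2' : (2:ℝ) ≤ (K:ℝ) := by exact_mod_cast hK2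
  have hc16 : (((K:ℝ)⁻¹ ^ 2) : ℝ) ^ d ≤ 16⁻¹ := by
    have h1 : (((K:ℝ)⁻¹ ^ 2) : ℝ) ^ d = ((K:ℝ) ^ (2*d))⁻¹ := by
      rw [← Real.rpow_natCast ((K:ℝ)⁻¹) 2, ← Real.rpow_mul (by positivity),
        Real.inv_rpow (by positivity)]
      norm_num
    rw [h1]
    exact inv_anti₀ (by norm_num) hK16
  set t : ∀ n : ℕ, (Fin n → ℕ) → Set ℝ :=
    fun n w => ASet β K N M ∩ {x | ∀ i : Fin n, cfA ((i:ℕ)+1) x = w i} with ht_def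
  -- basic facts about members of ASet
  have hfact : ∀ x ∈ ASet β K N M, ∀ i : ℕ, (1 ≤ cfA (i+1) x) ∧ (0:ℝ) < (cfA (i+1) x : ℝ) ∧
      ((cfA (i+1) x : ℝ))⁻¹ ^ 2 ≤ 1 := by
    intro x hx i
    have h1 : 1 ≤ cfA (i+1) x := hx.2.2.1 (i+1) (by omega)
    have h1' : (1:ℝ) ≤ (cfA (i+1) x : ℝ) := by exact_mod_cast h1
    refine ⟨h1, by linarith, ?_⟩
    have hinv : ((cfA (i+1) x : ℝ))⁻¹ ≤ 1 := inv_le_one_of_one_le₀ h1'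
    calc ((cfA (i+1) x : ℝ))⁻¹ ^ 2 ≤ 1 ^ 2 :=
          pow_le_pow_left₀ (by positivity) hinv 2
      _ = 1 := one_pow 2
  have hfactK : ∀ x ∈ ASet β K N M, ∀ i : ℕ, M ≤ i →
      ((cfA (i+1) x : ℝ))⁻¹ ^ 2 ≤ (K:ℝ)⁻¹ ^ 2 := by
    intro x hx i hi
    have hKle : K ≤ cfA (i+1) x := hx.2.2.2.2 (i+1) (by omega)
    have hKle' : (K:ℝ) ≤ (cfA (i+1) x : ℝ) := by exact_mod_cast hKle
    have hinv : ((cfA (i+1) x : ℝ))⁻¹ ≤ (K:ℝ)⁻¹ := inv_anti₀ hKpos hKle'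
    exact pow_le_pow_left₀ (by positivity) hinv 2
  -- the product bound for pairs in the same cylinder
  have hprod : ∀ n : ℕ, ∀ w : Fin n → ℕ, ∀ x ∈ t n w, ∀ y ∈ t n w,
      |x - y| ≤ ∏ i ∈ Finset.range n, ((cfA (i+1) x : ℝ))⁻¹ ^ 2 := by
    intro n w x hx y hy
    exact dist_le_prod n x y hx.1.1 hy.1.1 (fun i hi =>
      ⟨(hx.2 ⟨i, hi⟩).trans (hy.2 ⟨i, hi⟩).symm, (hfact x hx.1 i).1⟩)
  refine le_antisymm ?_ zero_le
  have hcov := Measure.hausdorffMeasure_le_liminf_tsum (ι := fun n : ℕ => Fin n → ℕ) d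
    (ASet β K N M) (l := atTop) (r := fun n => ENNReal.ofReal ((4⁻¹:ℝ) ^ (n - M)))
    ?_ t ?_ ?_
  · -- conclude:  liminf ≤ bound sequence → 0
    refine le_trans hcov ?_
    have hsum : ∀ n : ℕ, N ≤ n → M ≤ n → 1 ≤ n →
        (∑' w : Fin n → ℕ, EMetric.diam (t n w) ^ d)
          ≤ ENNReal.ofReal ((2:ℝ) ^ (n + ⌊(n:ℝ)^β⌋₊) * 16⁻¹ ^ (n - M)) := by
      intro n hN hM h1n
      set B := ⌊(n:ℝ)^β⌋₊ with hB
      set W : Finset (Fin n → ℕ) :=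
        (Fintype.piFinset fun _ : Fin n => Finset.Icc 1 B).filter
          (fun w => (∀ i j : Fin n, i ≤ j → w i ≤ w j) ∧
            ∀ i : Fin n, M ≤ (i:ℕ)+1 → K ≤ w i) with hWdef
      have hzero : ∀ w : (Fin n → ℕ), w ∉ W → EMetric.diam (t n w) ^ d = 0 := by
        intro w hw
        have hemp : t n w = ∅ := by
          rw [Set.eq_empty_iff_forall_notMem]
          intro x hxt
          obtain ⟨hxA, hxw⟩ := hxt
          apply hw
          rw [hWdef, Finset.mem_filter]
          refine ⟨?_, ?_, ?_⟩
          · rw [Fintype.mem_piFinset]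
            intro i
            rw [Finset.mem_Icc, ← hxw i]
            constructor
            · exact (hfact x hxA i).1
            · have hle : cfA ((i:ℕ)+1) x ≤ cfA n x :=
                cfA_chain hxA.2.1 ((i:ℕ)+1) n (by omega) (by omega)
              have hfl : cfA n x ≤ B := Nat.le_floor (hxA.2.2.2.1 n hN)
              omega
          · intro i j hij
            rw [← hxw i, ← hxw j]
            exact cfA_chain hxA.2.1 ((i:ℕ)+1) ((j:ℕ)+1) (by omega)
              (by have : (i:ℕ) ≤ (j:ℕ) := hij; omega)
          · intro i hi
            rw [← hxw i]
            exact hxA.2.2.2.2 ((i:ℕ)+1) hi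
        rw [hemp, show EMetric.diam (∅ : Set ℝ) = 0 from EMetric.diam_empty]
        exact ENNReal.zero_rpow_of_pos hd
      rw [tsum_eq_sum hzero]
      have hterm : ∀ w ∈ W, EMetric.diam (t n w) ^ d
          ≤ ENNReal.ofReal (16⁻¹ ^ (n - M)) := by
        intro w _
        rcases Set.eq_empty_or_nonempty (t n w) with he | ⟨x, hx⟩
        · rw [he, show EMetric.diam (∅ : Set ℝ) = 0 from EMetric.diam_empty, ENNReal.zero_rpow_of_pos hd]
          exact zero_le
        · set P : ℝ := ∏ i ∈ Finset.range n, ((cfA (i+1) x : ℝ))⁻¹ ^ 2 with hP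
          have hPnn : 0 ≤ P := Finset.prod_nonneg fun i _ => by positivity
          have hdiam : EMetric.diam (t n w) ≤ ENNReal.ofReal P := by
            apply EMetric.diam_le
            intro y hy z hz
            rw [edist_dist, Real.dist_eq]
            apply ENNReal.ofReal_le_ofReal
            have h1 := hprod n w y hy z hz
            have heqP : ∏ i ∈ Finset.range n, ((cfA (i+1) y : ℝ))⁻¹ ^ 2 = P := by
              rw [hP]
              refine Finset.prod_congr rfl fun i hi => ?_
              rw [Finset.mem_range] at hi
              rw [(hy.2 ⟨i, hi⟩ : cfA (i+1) y = w ⟨i, hi⟩),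
                ← (hx.2 ⟨i, hi⟩ : cfA (i+1) x = w ⟨i, hi⟩)]
            rw [heqP] at h1
            exact h1
          have hstep : EMetric.diam (t n w) ^ d ≤ ENNReal.ofReal (P ^ d) := by
            rw [← ENNReal.ofReal_rpow_of_nonneg hPnn hd.le]
            exact ENNReal.rpow_le_rpow hdiam hd.le
          refine hstep.trans (ENNReal.ofReal_le_ofReal ?_)
          have hPd : P ^ d = ∏ i ∈ Finset.range n, (((cfA (i+1) x : ℝ))⁻¹ ^ 2) ^ d := by
            rw [hP]
            exact (Real.finset_prod_rpow _ _ (fun i _ => by positivity) d).symm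
          rw [hPd]
          apply prod_le_pow (by norm_num) n M hM
          · intro i _
            refine ⟨by positivity, ?_⟩
            exact Real.rpow_le_one (by positivity) (hfact x hx.1 i).2.2 hd.le
          · intro i hiM _
            calc (((cfA (i+1) x : ℝ))⁻¹ ^ 2) ^ d ≤ ((K:ℝ)⁻¹ ^ 2) ^ d :=
                  Real.rpow_le_rpow (by positivity) (hfactK x hx.1 i hiM) hd.le
              _ ≤ 16⁻¹ := hc16
      calc ∑ w ∈ W, EMetric.diam (t n w) ^ d
          ≤ ∑ _w ∈ W, ENNReal.ofReal (16⁻¹ ^ (n - M)) := Finset.sum_le_sum hterm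
        _ = (W.card : ℝ≥0∞) * ENNReal.ofReal (16⁻¹ ^ (n - M)) := by
            rw [Finset.sum_const, nsmul_eq_mul]
        _ ≤ ((2:ℝ≥0∞) ^ (n + B)) * ENNReal.ofReal (16⁻¹ ^ (n - M)) := by
            apply mul_le_mul' ?_ le_rfl
            have hcard := card_words n B K M
            calc (W.card : ℝ≥0∞) ≤ ((2 ^ (n + B) : ℕ) : ℝ≥0∞) := by
                  exact_mod_cast hcard
              _ = (2:ℝ≥0∞) ^ (n + B) := by push_cast; ring
        _ = ENNReal.ofReal ((2:ℝ) ^ (n + B) * 16⁻¹ ^ (n - M)) := by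
            rw [ENNReal.ofReal_mul (by positivity),
              ENNReal.ofReal_pow (p := 2) (by norm_num)]
            norm_num
    have hbound : ∀ᶠ n in atTop,
        (∑' w : Fin n → ℕ, EMetric.diam (t n w) ^ d)
          ≤ ENNReal.ofReal ((2:ℝ) ^ (n + ⌊(n:ℝ)^β⌋₊) * 16⁻¹ ^ (n - M)) := by
      filter_upwards [eventually_ge_atTop N, eventually_ge_atTop M, eventually_ge_atTop 1]
        with n h1 h2 h3
      exact hsum n h1 h2 h3
    have htend : Tendsto (fun n : ℕ =>
        ENNReal.ofReal ((2:ℝ) ^ (n + ⌊(n:ℝ)^β⌋₊) * 16⁻¹ ^ (n - M))) atTop (nhds 0) := by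
      have hreal : Tendsto (fun n : ℕ =>
          (2:ℝ) ^ (n + ⌊(n:ℝ)^β⌋₊) * 16⁻¹ ^ (n - M)) atTop (nhds 0) := by
        apply squeeze_zero' (Filter.Eventually.of_forall fun n => by positivity)
          (g := fun n : ℕ => (16:ℝ)^M * 4⁻¹ ^ n)
        · filter_upwards [eventually_ge_atTop M, eventually_ge_atTop 1] with n hM h1n
          have hBle : ⌊(n:ℝ)^β⌋₊ ≤ n := by
            have h1 : (n:ℝ) ^ β ≤ (n:ℝ) ^ (1:ℝ) :=
              Real.rpow_le_rpow_of_exponent_le (by exact_mod_cast h1n) hβ1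
            rw [Real.rpow_one] at h1
            calc ⌊(n:ℝ)^β⌋₊ ≤ ⌊(n:ℝ)⌋₊ := Nat.floor_le_floor h1
              _ = n := Nat.floor_natCast n
          have h2pow : (2:ℝ) ^ (n + ⌊(n:ℝ)^β⌋₊) ≤ (4:ℝ) ^ n := by
            calc (2:ℝ) ^ (n + ⌊(n:ℝ)^β⌋₊) ≤ (2:ℝ) ^ (2 * n) :=
                  pow_le_pow_right₀ (by norm_num) (by omega)
              _ = (4:ℝ) ^ n := by rw [pow_mul]; norm_num
          have h16 : (16⁻¹:ℝ) ^ (n - M) = 16 ^ M * 16⁻¹ ^ n := by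
            have : (16⁻¹:ℝ) ^ (n - M) * 16⁻¹ ^ M = 16⁻¹ ^ n := by
              rw [← pow_add]
              congr 1
              omega
            have h16M : ((16:ℝ)⁻¹) ^ M ≠ 0 := by positivity
            field_simp at this ⊢
            rw [← this, mul_assoc, ← mul_pow]; norm_num
          calc (2:ℝ) ^ (n + ⌊(n:ℝ)^β⌋₊) * 16⁻¹ ^ (n - M)
              ≤ (4:ℝ) ^ n * (16 ^ M * 16⁻¹ ^ n) := by
                rw [h16]
                exact mul_le_mul_of_nonneg_right h2pow (by positivity)
            _ = (16:ℝ)^M * 4⁻¹ ^ n := by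
                rw [show (4:ℝ) ^ n * (16 ^ M * 16⁻¹ ^ n) =
                  (16:ℝ)^M * ((4:ℝ) ^ n * 16⁻¹ ^ n) by ring, ← mul_pow]
                norm_num
        · have := (tendsto_pow_atTop_nhds_zero_of_lt_one
            (by norm_num : (0:ℝ) ≤ 4⁻¹) (by norm_num : (4⁻¹:ℝ) < 1)).const_mul ((16:ℝ)^M)
          simpa using this
      have := ENNReal.tendsto_ofReal hreal
      simpa using this
    calc liminf (fun n : ℕ => ∑' w : Fin n → ℕ, EMetric.diam (t n w) ^ d) atTop
        ≤ liminf (fun n : ℕ =>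
            ENNReal.ofReal ((2:ℝ) ^ (n + ⌊(n:ℝ)^β⌋₊) * 16⁻¹ ^ (n - M))) atTop :=
          liminf_le_liminf hbound
      _ = 0 := htend.liminf_eq
  · -- hr
    have hreal : Tendsto (fun n : ℕ => (4⁻¹:ℝ) ^ (n - M)) atTop (nhds 0) :=
      (tendsto_pow_atTop_nhds_zero_of_lt_one (by norm_num) (by norm_num)).comp
        (tendsto_sub_atTop_nat M)
    have := ENNReal.tendsto_ofReal hreal
    simpa using this
  · -- ht : diameters
    filter_upwards [eventually_ge_atTop M] with n hM
    intro w
    apply EMetric.diam_le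
    intro x hx y hy
    rw [edist_dist, Real.dist_eq]
    apply ENNReal.ofReal_le_ofReal
    refine (hprod n w x hx y hy).trans ?_
    apply prod_le_pow (by norm_num) n M hM
    · intro i _
      exact ⟨by positivity, (hfact x hx.1 i).2.2⟩
    · intro i hiM _
      calc ((cfA (i+1) x : ℝ))⁻¹ ^ 2 ≤ (K:ℝ)⁻¹ ^ 2 := hfactK x hx.1 i hiM
        _ ≤ (2:ℝ)⁻¹ ^ 2 := by
            apply pow_le_pow_left₀ (by positivity)
            exact inv_anti₀ (by norm_num) hK2'
        _ = 4⁻¹ := by norm_num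
  · -- hst : covers
    apply Filter.Eventually.of_forall
    intro n x hx
    exact Set.mem_iUnion.2 ⟨fun i => cfA ((i:ℕ)+1) x, hx, fun i => rfl⟩

lemma one_le_cfA_one {x : ℝ} (hx : x ∈ Set.Ioo (0:ℝ) 1) : 1 ≤ cfA 1 x := by
  rw [cfA_one_eq]
  apply Nat.le_floor
  rw [Nat.cast_one]
  have : 1 < x⁻¹ := (one_lt_inv₀ hx.1).2 hx.2
  linarith

/-- If `ψ(n) → ∞` and `ψ(n)/log n → α` with `0 ≤ α < 1`, then `E_sup(Λ,ψ)`
has Hausdorff dimension `0`. -/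
theorem dimH_Esup_Lam_zero (ψ : ℕ → ℝ) (hψpos : ∀ n, 0 < ψ n)
    (hψ : Tendsto ψ atTop atTop) (α : ℝ) (h0 : 0 ≤ α) (h1 : α < 1)
    (hα : Tendsto (fun n : ℕ => ψ n / Real.log n) atTop (nhds α)) :
    dimH {x | x ∈ Lam ∧
        Filter.limsup (fun n : ℕ => ((Real.log (cfA n x) / ψ n : ℝ) : EReal)) atTop =
          (1 : EReal)} = 0 := by
  have hβ1 : (1 + α)/2 ≤ 1 := by linarith
  refine le_antisymm (dimH_le fun d' hd' => ?_) zero_le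
  rcases eq_or_ne d' 0 with rfl | hne
  · simp
  exfalso
  have hdpos : (0:ℝ) < (d' : ℝ) := by
    have : 0 < d' := pos_iff_ne_zero.mpr hne
    exact_mod_cast this
  obtain ⟨K, hK2, hK16⟩ : ∃ K : ℕ, 2 ≤ K ∧ (16:ℝ) ≤ (K:ℝ) ^ (2 * (d':ℝ)) := by
    refine ⟨max 2 ⌈(16:ℝ) ^ (1/(2*(d':ℝ)))⌉₊, le_max_left _ _, ?_⟩
    have hbase : (16:ℝ) ^ (1/(2*(d':ℝ))) ≤ ((max 2 ⌈(16:ℝ) ^ (1/(2*(d':ℝ)))⌉₊ : ℕ) : ℝ) := by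
      calc (16:ℝ) ^ (1/(2*(d':ℝ))) ≤ (⌈(16:ℝ) ^ (1/(2*(d':ℝ)))⌉₊ : ℝ) := Nat.le_ceil _
        _ ≤ _ := by exact_mod_cast Nat.le_max_right 2 _
    have h2d : (0:ℝ) < 2 * (d':ℝ) := by linarith
    calc (16:ℝ) = ((16:ℝ) ^ (1/(2*(d':ℝ)))) ^ (2*(d':ℝ)) := by
          rw [← Real.rpow_mul (by norm_num), one_div,
            inv_mul_cancel₀ (ne_of_gt h2d), Real.rpow_one]
      _ ≤ _ := Real.rpow_le_rpow (Real.rpow_nonneg (by norm_num) _) hbase h2d.le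
  have hmu : ∀ N M : ℕ, μH[(d':ℝ)] (ASet ((1+α)/2) K N M) = 0 :=
    fun N M => mu_ASet hβ1 hdpos K N M hK2 hK16
  have hsub : {x | x ∈ Lam ∧ Filter.limsup (fun n : ℕ =>
      ((Real.log (cfA n x) / ψ n : ℝ) : EReal)) atTop = (1 : EReal)}
      ⊆ ⋃ N : ℕ, ⋃ M : ℕ, ASet ((1+α)/2) K N M := by
    rintro x ⟨⟨hxI, hmono⟩, hlim⟩
    have hone : ∀ n, 1 ≤ n → 1 ≤ cfA n x := fun n hn =>
      le_trans (one_le_cfA_one hxI) (cfA_chain hmono 1 n le_rfl hn)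
    set ε : ℝ := (1 - α)/8 with hε
    have hε0 : 0 < ε := by rw [hε]; linarith
    have hlt1 : limsup (fun n : ℕ => ((Real.log (cfA n x) / ψ n : ℝ) : EReal)) atTop
        < ((1+ε : ℝ) : EReal) := by
      rw [hlim, ← EReal.coe_one]
      exact_mod_cast (by linarith : (1:ℝ) < 1 + ε)
    have hev1 := eventually_lt_of_limsup_lt hlt1
    have hev2 : ∀ᶠ n : ℕ in atTop, ψ n / Real.log n < α + ε :=
      hα.eventually_lt_const (by linarith)
    obtain ⟨N, hN⟩ := eventually_atTop.1 (hev1.and (hev2.and (eventually_ge_atTop 2)))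
    have hgrow : ∀ K' : ℕ, ∃ M, ∀ n, M ≤ n → K' ≤ cfA n x := by
      intro K'
      have hgt : ((1/2 : ℝ) : EReal)
          < limsup (fun n : ℕ => ((Real.log (cfA n x) / ψ n : ℝ) : EReal)) atTop := by
        rw [hlim, ← EReal.coe_one]
        exact_mod_cast (by norm_num : (1/2:ℝ) < 1)
      have hfr := frequently_lt_of_lt_limsup (h := hgt)
      obtain ⟨m, hmlt, hmψ, hm1⟩ := (hfr.and_eventually
        ((hψ.eventually_ge_atTop (2 * (Real.log K' + 1))).and
          (eventually_ge_atTop 1))).exists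
      have hmlt' : (1/2 : ℝ) < Real.log (cfA m x) / ψ m := by exact_mod_cast hmlt
      have hψm := hψpos m
      have hlogm : Real.log K' + 1 ≤ Real.log (cfA m x) := by
        have h2 : (1/2) * ψ m < Real.log (cfA m x) := (lt_div_iff₀ hψm).1 hmlt'
        linarith
      have hcp : (0:ℝ) < (cfA m x : ℝ) :=
        Nat.cast_pos.2 (lt_of_lt_of_le zero_lt_one (hone m hm1))
      have hKlt : (K' : ℝ) < (cfA m x : ℝ) := by
        rcases Nat.eq_zero_or_pos K' with rfl | hK'pos
        · exact_mod_cast hcp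
        · have hK'p : (0:ℝ) < K' := by exact_mod_cast hK'pos
          rw [← Real.log_lt_log_iff hK'p hcp]
          linarith
      have hKle : K' ≤ cfA m x := (Nat.cast_lt.1 hKlt).le
      exact ⟨m, fun n hn => le_trans hKle (cfA_chain hmono m n hm1 hn)⟩
    obtain ⟨M, hM⟩ := hgrow K
    refine Set.mem_iUnion.2 ⟨N, Set.mem_iUnion.2 ⟨M, ?_⟩⟩
    refine ⟨⟨hxI.1.le, hxI.2⟩, hmono, hone, ?_, hM⟩
    intro n hn
    obtain ⟨hn1, hn2, hn3⟩ := hN n hn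
    have hlogn : (0:ℝ) < Real.log n :=
      Real.log_pos (by exact_mod_cast hn3)
    have hn1' : Real.log (cfA n x) / ψ n < 1 + ε := by exact_mod_cast hn1
    have hψn := hψpos n
    have hlog1 : Real.log (cfA n x) < (1+ε) * ψ n := (div_lt_iff₀ hψn).1 hn1'
    have hlog2 : ψ n < (α + ε) * Real.log n := (div_lt_iff₀ hlogn).1 hn2
    have hcoef : (1+ε) * (α+ε) ≤ (1+α)/2 := by rw [hε]; nlinarith
    have hfin : Real.log (cfA n x) ≤ (1+α)/2 * Real.log n := by
      nlinarith [mul_le_mul_of_nonneg_right hcoef hlogn.le,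
        mul_lt_mul_of_pos_left hlog2 (show (0:ℝ) < 1+ε by linarith)]
    have hcpos : (0:ℝ) < (cfA n x : ℝ) :=
      Nat.cast_pos.2 (lt_of_lt_of_le zero_lt_one (hone n (by omega)))
    have hnpos : (0:ℝ) < (n:ℝ) := by
      have : (0:ℕ) < n := by omega
      exact_mod_cast this
    calc (cfA n x : ℝ) = Real.exp (Real.log (cfA n x)) := (Real.exp_log hcpos).symm
      _ ≤ Real.exp ((1+α)/2 * Real.log n) := Real.exp_le_exp.2 hfin
      _ = (n:ℝ) ^ ((1+α)/2) := by
          rw [Real.rpow_def_of_pos hnpos]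
          ring_nf
  have h0' := measure_mono_null hsub
    (measure_iUnion_null fun N => measure_iUnion_null fun M => hmu N M)
  rw [hd'] at h0'
  exact ENNReal.top_ne_zero h0'
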